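/- There exists a constant c > 0 such that for all real x ≥ 1, Ψ(x) ≤ c·x, where Ψ(x) = ∑_{n ≤ x} Λ(n) is the second Chebyshev function. -/

import Mathlib

open ArithmeticFunction Finset

/-- Chebyshev θ bound: sum of log p over primes p ≤ M is at most M log 4. -/
lemma theta_le (M : ℕ) :
    ∑ p ∈ (range (M + 1)).filter Nat.Prime, Real.log p ≤ M * Real.log 4 := by
  have h1 : ∑ p ∈ (range (M + 1)).filter Nat.Prime, Real.log p
      = Real.log (primorial M : ℝ) := by
    rw [primorial, Nat.cast_prod, Real.log_prod]
    intro p hp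
    exact_mod_cast (mem_filter.1 hp).2.pos.ne'
  rw [h1]
  calc Real.log (primorial M : ℝ) ≤ Real.log ((4 : ℝ) ^ M) := by
        apply Real.log_le_log (by exact_mod_cast primorial_pos M)
        exact_mod_cast primorial_le_4_pow M
    _ = M * Real.log 4 := by rw [Real.log_pow]

theorem chebyshev_psi_le_linear :
    ∃ c > 0, ∀ x : ℝ, 1 ≤ x →
      (∑ n ∈ Finset.Icc 1 ⌊x⌋₊, (Λ n : ℝ)) ≤ c * x := by
  have hlog4 : (0:ℝ) < Real.log 4 := Real.log_pos (by norm_num)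
  have hlog2 : (0:ℝ) < Real.log 2 := Real.log_pos (by norm_num)
  refine ⟨Real.log 4 * (1 + 2 / Real.log 2), by positivity, fun x hx => ?_⟩
  set N := ⌊x⌋₊ with hN
  have hN1 : 1 ≤ N := (Nat.one_le_floor_iff x).mpr hx
  have hNx : (N : ℝ) ≤ x := Nat.floor_le (by linarith)
  set K := Nat.log 2 N with hK
  -- sets of primes p with p^k ≤ N
  set P : ℕ → Finset ℕ := fun k => (range (N + 1)).filter (fun p => p.Prime ∧ p ^ k ≤ N)
    with hP
  -- decompose prime powers
  have hsub : (Finset.Icc 1 N).filter IsPrimePow ⊆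
      (Finset.Icc 1 K).biUnion (fun k => (P k).image (· ^ k)) := by
    intro n hn
    rw [mem_filter] at hn
    obtain ⟨p, k, hp, hk, rfl⟩ := (isPrimePow_nat_iff _).1 hn.2
    have hmem := hn.1
    rw [Finset.mem_Icc] at hmem
    have hpkN : p ^ k ≤ N := hmem.2
    have h2k : 2 ^ k ≤ N := le_trans (Nat.pow_le_pow_left hp.two_le k) hpkN
    have hkK : k ≤ K := (Nat.le_log_iff_pow_le (by norm_num) (by omega)).2 h2k
    refine Finset.mem_biUnion.2 ⟨k, Finset.mem_Icc.2 ⟨hk, hkK⟩, ?_⟩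
    refine Finset.mem_image.2 ⟨p, ?_, rfl⟩
    refine mem_filter.2 ⟨mem_range.2 ?_, hp, hpkN⟩
    have : p ≤ p ^ k := Nat.le_self_pow (by omega) p
    omega
  -- pairwise disjointness
  have hdisj : ∀ i ∈ Finset.Icc 1 K, ∀ j ∈ Finset.Icc 1 K, i ≠ j →
      Disjoint ((P i).image (· ^ i)) ((P j).image (· ^ j)) := by
    intro i hi j hj hij
    rw [Finset.disjoint_left]
    rintro n hni hnj
    obtain ⟨p, hp, rfl⟩ := Finset.mem_image.1 hni
    obtain ⟨q, hq, hpq⟩ := Finset.mem_image.1 hnj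
    have hpP := (mem_filter.1 hp).2.1
    have hqP := (mem_filter.1 hq).2.1
    have hi1 : 1 ≤ i := (Finset.mem_Icc.1 hi).1
    have hj1 : 1 ≤ j := (Finset.mem_Icc.1 hj).1
    have hqp : q = p := by
      have hd : q ∣ p ^ i := hpq ▸ dvd_pow_self q (by omega)
      exact (Nat.prime_dvd_prime_iff_eq hqP hpP).1 (Nat.Prime.dvd_of_dvd_pow hqP hd)
    subst hqp
    exact hij (Nat.pow_right_injective hpP.two_le hpq.symm).symm.symm
  set s := Nat.sqrt N with hs
  -- inner sums bounded
  have hinner : ∀ k ∈ Finset.Icc 1 K, ∑ n ∈ (P k).image (· ^ k), (Λ n : ℝ) ≤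
      (s : ℝ) * Real.log 4 + (if 1 = k then ((N : ℝ) - s) * Real.log 4 else 0) := by
    intro k hk
    have hk1 : 1 ≤ k := (Finset.mem_Icc.1 hk).1
    have himg : ∑ n ∈ (P k).image (· ^ k), (Λ n : ℝ) = ∑ p ∈ P k, Real.log p := by
      rw [Finset.sum_image (fun a _ b _ h => Nat.pow_left_injective (by omega) h)]
      refine Finset.sum_congr rfl fun p hp => ?_
      rw [vonMangoldt_apply_pow (by omega),
        vonMangoldt_apply_prime (mem_filter.1 hp).2.1]
    rw [himg]
    have hθ : ∀ M : ℕ, P k ⊆ (range (M + 1)).filter Nat.Prime →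
        ∑ p ∈ P k, Real.log p ≤ (M : ℝ) * Real.log 4 := by
      intro M hsub'
      refine le_trans (Finset.sum_le_sum_of_subset_of_nonneg hsub' ?_) (theta_le M)
      intro p hp _
      have : 2 ≤ p := (mem_filter.1 hp).2.two_le
      exact Real.log_nonneg (by exact_mod_cast (by omega : 1 ≤ p))
    rcases eq_or_lt_of_le hk1 with h1 | h2
    · rw [if_pos h1]
      have := hθ N (fun p hp => mem_filter.2 ⟨(mem_filter.1 hp).1, (mem_filter.1 hp).2.1⟩)
      linarith
    · rw [if_neg (by omega)]
      have hsN : (s : ℝ) * Real.log 4 + 0 = (s : ℝ) * Real.log 4 := by ring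
      rw [hsN]
      refine hθ s fun p hp => ?_
      have hp' := mem_filter.1 hp
      have hpp := hp'.2.1
      have hps : p ≤ s := by
        rw [hs, Nat.le_sqrt']
        calc p ^ 2 ≤ p ^ k := Nat.pow_le_pow_right hpp.pos (by omega)
          _ ≤ N := hp'.2.2
      exact mem_filter.2 ⟨mem_range.2 (by omega), hpp⟩
  -- assemble
  have hmain : (∑ n ∈ Finset.Icc 1 N, (Λ n : ℝ)) ≤
      (K : ℝ) * ((s : ℝ) * Real.log 4) + (N : ℝ) * Real.log 4 := by
    calc ∑ n ∈ Finset.Icc 1 N, (Λ n : ℝ)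
        = ∑ n ∈ (Finset.Icc 1 N).filter IsPrimePow, (Λ n : ℝ) := by
          rw [Finset.sum_filter_of_ne fun n _ h => vonMangoldt_ne_zero_iff.1 h]
      _ ≤ ∑ n ∈ (Finset.Icc 1 K).biUnion (fun k => (P k).image (· ^ k)), (Λ n : ℝ) :=
          Finset.sum_le_sum_of_subset_of_nonneg hsub (fun _ _ _ => vonMangoldt_nonneg)
      _ = ∑ k ∈ Finset.Icc 1 K, ∑ n ∈ (P k).image (· ^ k), (Λ n : ℝ) :=
          Finset.sum_biUnion (fun i hi j hj hij => hdisj i hi j hj hij)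
      _ ≤ ∑ k ∈ Finset.Icc 1 K, ((s : ℝ) * Real.log 4 +
            (if 1 = k then ((N : ℝ) - s) * Real.log 4 else 0)) :=
          Finset.sum_le_sum hinner
      _ = (K : ℝ) * ((s : ℝ) * Real.log 4) +
            (if 1 ∈ Finset.Icc 1 K then ((N : ℝ) - s) * Real.log 4 else 0) := by
          rw [Finset.sum_add_distrib, Finset.sum_const, Finset.sum_ite_eq]
          simp [Nat.card_Icc]
      _ ≤ (K : ℝ) * ((s : ℝ) * Real.log 4) + (N : ℝ) * Real.log 4 := by
          gcongr
          split
          · have : (0:ℝ) ≤ (s : ℝ) := by positivity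
            nlinarith
          · positivity
  -- analytic bound: K * s ≤ 2 / log 2 * N
  have hKs : (K : ℝ) * s ≤ 2 / Real.log 2 * N := by
    have h2K : (2 : ℝ) ^ K ≤ N := by exact_mod_cast Nat.pow_log_le_self 2 (by omega)
    have hKlog : (K : ℝ) * Real.log 2 ≤ Real.log N := by
      calc (K : ℝ) * Real.log 2 = Real.log ((2:ℝ) ^ K) := by
            rw [Real.log_pow]
        _ ≤ Real.log N := Real.log_le_log (by positivity) h2K
    have hN0 : (1:ℝ) ≤ (N:ℝ) := by exact_mod_cast hN1
    have hsle : (s : ℝ) ≤ Real.sqrt N := by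
      rw [Real.le_sqrt (by positivity) (by positivity)]
      exact_mod_cast Nat.sqrt_le' N
    have hsq1 : (1:ℝ) ≤ Real.sqrt N := by
      rw [show (1:ℝ) = Real.sqrt 1 by simp]
      exact Real.sqrt_le_sqrt hN0
    have hlogN : Real.log N ≤ 2 * Real.sqrt N := by
      have h1 := Real.log_sqrt (show (0:ℝ) ≤ (N:ℝ) by positivity)
      have h2 := Real.log_le_sub_one_of_pos (show (0:ℝ) < Real.sqrt N by linarith)
      linarith
    have hK' : (K : ℝ) ≤ 2 * Real.sqrt N / Real.log 2 := by
      rw [le_div_iff₀ hlog2]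
      linarith
    calc (K : ℝ) * s ≤ (2 * Real.sqrt N / Real.log 2) * Real.sqrt N := by
          apply mul_le_mul hK' hsle (by positivity)
          positivity
      _ = 2 / Real.log 2 * (Real.sqrt N * Real.sqrt N) := by ring
      _ = 2 / Real.log 2 * N := by rw [Real.mul_self_sqrt (by positivity)]
  calc (∑ n ∈ Finset.Icc 1 N, (Λ n : ℝ))
      ≤ (K : ℝ) * ((s : ℝ) * Real.log 4) + (N : ℝ) * Real.log 4 := hmain
    _ ≤ (2 / Real.log 2 * N) * Real.log 4 + (N : ℝ) * Real.log 4 := by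
        rw [← mul_assoc]
        gcongr
    _ = Real.log 4 * (1 + 2 / Real.log 2) * N := by ring
    _ ≤ Real.log 4 * (1 + 2 / Real.log 2) * x := by
        gcongr
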